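/- Fix s ∈ ℝ^m and let q₀ = ((0,0,0,s), 0) ∈ ℝ^n × ℝ. Let K ⊂ ℝ^n × ℝ be the span of (e_z, 0) and (0,1), and let C ⊂ ℝ^{n+k} be the span of e_{Y_1}, …, e_{Y_k}, e_Z. Then: (i) K is the kernel of Df̃_{q₀} and C is the orthogonal complement of the range of Df̃_{q₀}; (ii) the map Φ : q ↦ Df̃_q from ℝ^n × ℝ to the space of linear maps ℝ^n × ℝ → ℝ^{n+k} is differentiable at q₀, and the linear map T : ℝ^n × ℝ → Hom(K, C) defined by T(v)(κ) = (orthogonal projection onto C of) (DΦ_{q₀}(v))(κ), for κ ∈ K, is surjective. (This expresses that the 1-jet extension of the de-suspension f̃ is transverse to the stratum of corank-2 linear maps at every corank-2 point of f̃.) -/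

import Mathlib

noncomputable section

open scoped RealInnerProductSpace

/-- Index type for the domain `ℝⁿ`, `n = 2k+2+m`: coordinates `x` (2k of them),
`y`, `z`, and `s` (m of them). -/
abbrev DomIx (k m : ℕ) := (Fin (2*k)) ⊕ Unit ⊕ Unit ⊕ (Fin m)

/-- The domain `ℝⁿ` with its Euclidean inner product. -/
abbrev Dom (k m : ℕ) := EuclideanSpace ℝ (DomIx k m)

/-- Index type for the codomain `ℝ^{n+k}`: coordinates `X` (2k+1), `Y` (k), `Z`, `S` (m). -/
abbrev CodIx (k m : ℕ) := (Fin (2*k+1)) ⊕ (Fin k) ⊕ Unit ⊕ (Fin m)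

/-- The codomain `ℝ^{n+k}` with its Euclidean inner product. -/
abbrev Cod (k m : ℕ) := EuclideanSpace ℝ (CodIx k m)

/-- The `x`-coordinates of a point (0-based: `px p j` is `x_{j+1}`). -/
def px {k m : ℕ} (p : Dom k m) (j : Fin (2*k)) : ℝ := p (Sum.inl j)

/-- The `y`-coordinate of a point. -/
def py {k m : ℕ} (p : Dom k m) : ℝ := p (Sum.inr (Sum.inl ()))

/-- The `z`-coordinate of a point. -/
def pz {k m : ℕ} (p : Dom k m) : ℝ := p (Sum.inr (Sum.inr (Sum.inl ())))

/-- The `s`-coordinates of a point. -/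
def ps {k m : ℕ} (p : Dom k m) (j : Fin m) : ℝ := p (Sum.inr (Sum.inr (Sum.inr j)))

/-- The (0-based) index of the coordinate `x_{2i-1}` (1-based), for `i : Fin k` (0-based). -/
def xo {k : ℕ} (i : Fin k) : Fin (2*k) := ⟨2*i.1, by have := i.isLt; omega⟩

/-- The (0-based) index of the coordinate `x_{2i}` (1-based), for `i : Fin k` (0-based). -/
def xe {k : ℕ} (i : Fin k) : Fin (2*k) := ⟨2*i.1+1, by have := i.isLt; omega⟩

/-- The cusp normal form `f : ℝⁿ → ℝ^{n+k}`:
`X_i = x_i`, `X_{2k+1} = y`, `Y_i = z x_{2i-1} + z² x_{2i}`, `Z = z y + z³`, `S_j = s_j`. -/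
def cuspF (k m : ℕ) (p : Dom k m) : Cod k m :=
  (EuclideanSpace.equiv (CodIx k m) ℝ).symm fun q =>
    match q with
    | Sum.inl j => if h : j.1 < 2*k then px p ⟨j.1, h⟩ else py p
    | Sum.inr (Sum.inl i) => pz p * px p (xo i) + (pz p)^2 * px p (xe i)
    | Sum.inr (Sum.inr (Sum.inl _)) => pz p * py p + (pz p)^3
    | Sum.inr (Sum.inr (Sum.inr j)) => ps p j

/-- The singular set `Σ(f)` of the cusp normal form:
`x_{2i-1} + 2 z x_{2i} = 0` for all `i` and `y + 3z² = 0`. -/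
def SingSet (k m : ℕ) : Set (Dom k m) :=
  {p | (∀ i : Fin k, px p (xo i) + 2 * pz p * px p (xe i) = 0) ∧ py p + 3 * (pz p)^2 = 0}

/-- The standard basis vector `e_z` of the domain. -/
def ez (k m : ℕ) : Dom k m := EuclideanSpace.single (Sum.inr (Sum.inr (Sum.inl ()))) 1


/-- The section `σ : ℝⁿ → ℝ^{n+k}` given coordinatewise (1-based, `1 ≤ i ≤ k`) by
`σ_{X_{2i−1}} = −2z x_{2i}/(1+z²+z⁴)`, `σ_{X_{2i}} = −2z² x_{2i}/(1+z²+z⁴)`,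
`σ_{X_{2k+1}} = −6z²/(1+z²)`, `σ_{Y_i} = 2x_{2i}/(1+z²+z⁴)`, `σ_Z = 6z/(1+z²)`, `σ_{S_j} = 0`. -/
def sigmaF (k m : ℕ) (p : Dom k m) : Cod k m :=
  (EuclideanSpace.equiv (CodIx k m) ℝ).symm fun q =>
    match q with
    | Sum.inl j =>
        if h : j.1 < 2*k then
          if h2 : j.1 % 2 = 0 then
            -- the coordinate `X_{2i-1}` (1-based) with `2i-1 = j.1+1`, so `x_{2i} = x`-coord `j.1+1`
            -2 * pz p * px p ⟨j.1+1, by omega⟩ / (1 + (pz p)^2 + (pz p)^4)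
          else
            -- the coordinate `X_{2i}` (1-based) with `2i = j.1+1`, so `x_{2i} = x`-coord `j.1`
            -2 * (pz p)^2 * px p ⟨j.1, h⟩ / (1 + (pz p)^2 + (pz p)^4)
        else
          -- the coordinate `X_{2k+1}`
          -6 * (pz p)^2 / (1 + (pz p)^2)
    | Sum.inr (Sum.inl i) => 2 * px p (xe i) / (1 + (pz p)^2 + (pz p)^4)
    | Sum.inr (Sum.inr (Sum.inl _)) => 6 * pz p / (1 + (pz p)^2)
    | Sum.inr (Sum.inr (Sum.inr _)) => 0

/-- The de-suspension `f̃ : ℝⁿ × ℝ → ℝ^{n+k}`, `f̃(p, t) = f(p) + t σ(p)`. -/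
def ftilde (k m : ℕ) (q : Dom k m × ℝ) : Cod k m :=
  cuspF k m q.1 + q.2 • sigmaF k m q.1

/-- The point `(0, 0, 0, s) ∈ ℝⁿ`. -/
def pOfS (k m : ℕ) (s : Fin m → ℝ) : Dom k m :=
  (EuclideanSpace.equiv (DomIx k m) ℝ).symm fun q =>
    match q with
    | Sum.inl _ => 0
    | Sum.inr (Sum.inl _) => 0
    | Sum.inr (Sum.inr (Sum.inl _)) => 0
    | Sum.inr (Sum.inr (Sum.inr j)) => s j

/-- The standard basis vector `e_{Y_i}` (0-based `i`) of the codomain. -/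
def eY (k m : ℕ) (i : Fin k) : Cod k m := EuclideanSpace.single (Sum.inr (Sum.inl i)) 1

/-- The standard basis vector `e_Z` of the codomain. -/
def eZ (k m : ℕ) : Cod k m := EuclideanSpace.single (Sum.inr (Sum.inr (Sum.inl ()))) 1

/-- `K ⊆ ℝⁿ × ℝ`: the span of `(e_z, 0)` and `(0, 1)`. -/
def Kspan (k m : ℕ) : Submodule ℝ (Dom k m × ℝ) :=
  Submodule.span ℝ {((ez k m, 0) : Dom k m × ℝ), ((0, 1) : Dom k m × ℝ)}

/-- `C ⊆ ℝ^{n+k}`: the span of `e_{Y_1}, …, e_{Y_k}, e_Z`. -/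
def Cspan (k m : ℕ) : Submodule ℝ (Cod k m) :=
  Submodule.span ℝ (insert (eZ k m) (Set.range (eY k m)))

namespace S8
open ContinuousLinearMap

abbrev yI (k m : ℕ) : DomIx k m := Sum.inr (Sum.inl ())
abbrev zI (k m : ℕ) : DomIx k m := Sum.inr (Sum.inr (Sum.inl ()))
abbrev sI (k m : ℕ) (j : Fin m) : DomIx k m := Sum.inr (Sum.inr (Sum.inr j))

abbrev PX (k m : ℕ) (j : Fin (2*k)) : Dom k m →L[ℝ] ℝ := EuclideanSpace.proj (Sum.inl j)
abbrev PY (k m : ℕ) : Dom k m →L[ℝ] ℝ := EuclideanSpace.proj (yI k m)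
abbrev PZ (k m : ℕ) : Dom k m →L[ℝ] ℝ := EuclideanSpace.proj (zI k m)
abbrev PS (k m : ℕ) (j : Fin m) : Dom k m →L[ℝ] ℝ := EuclideanSpace.proj (sI k m j)

def frow (k m : ℕ) (p : Dom k m) : CodIx k m → (Dom k m →L[ℝ] ℝ)
  | Sum.inl j => if h : j.1 < 2*k then PX k m ⟨j.1, h⟩ else PY k m
  | Sum.inr (Sum.inl i) =>
      pz p • PX k m (xo i) + (pz p)^2 • PX k m (xe i)
        + (px p (xo i) + 2 * pz p * px p (xe i)) • PZ k m
  | Sum.inr (Sum.inr (Sum.inl _)) => pz p • PY k m + (py p + 3*(pz p)^2) • PZ k m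
  | Sum.inr (Sum.inr (Sum.inr j)) => PS k m j

def Df (k m : ℕ) (p : Dom k m) : Dom k m →L[ℝ] Cod k m :=
  ∑ q, (frow k m p q).smulRight (EuclideanSpace.single q 1)

lemma coord_sum {ι : Type*} [Fintype ι] {α : Type*} (t : Finset α)
    (f : α → EuclideanSpace ℝ ι) (q : ι) : (∑ a ∈ t, f a) q = ∑ a ∈ t, f a q :=
  map_sum (EuclideanSpace.projₗ q) f t

lemma Df_apply (k m : ℕ) (p v : Dom k m) (q : CodIx k m) :
    Df k m p v q = frow k m p q v := by
  rcases q with j | i | u | j <;>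
    simp [Df, ContinuousLinearMap.sum_apply, coord_sum, EuclideanSpace.single_apply]

theorem hasFDerivAt_euclidean {E : Type*} [NormedAddCommGroup E] [NormedSpace ℝ E]
    {ι : Type*} [Fintype ι] {f : E → EuclideanSpace ℝ ι}
    {D : E →L[ℝ] EuclideanSpace ℝ ι} {x : E}
    (h : ∀ i, HasFDerivAt (fun x => f x i) ((EuclideanSpace.proj i).comp D) x) :
    HasFDerivAt f D x := by
  let e : EuclideanSpace ℝ ι ≃L[ℝ] (ι → ℝ) := PiLp.continuousLinearEquiv 2 ℝ _
  have h2 : HasFDerivAt (fun x => e (f x)) ((e : EuclideanSpace ℝ ι →L[ℝ] (ι → ℝ)).comp D) x := by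
    refine hasFDerivAt_pi'' fun i => ?_
    exact h i
  have h3 := (e.symm.comp_hasFDerivAt_iff (f' := (e : EuclideanSpace ℝ ι →L[ℝ] (ι → ℝ)).comp D)).2 h2
  have h4 : HasFDerivAt f ((e.symm : (ι → ℝ) →L[ℝ] EuclideanSpace ℝ ι).comp ((e : EuclideanSpace ℝ ι →L[ℝ] (ι → ℝ)).comp D)) x := h3
  have : ((e.symm : (ι → ℝ) →L[ℝ] EuclideanSpace ℝ ι).comp ((e : EuclideanSpace ℝ ι →L[ℝ] (ι → ℝ)).comp D)) = D := by
    ext v i; rfl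
  rwa [this] at h4

open ContinuousLinearMap

lemma proj_comp_eq_frow (k m : ℕ) (p : Dom k m) (q : CodIx k m) :
    (EuclideanSpace.proj q).comp (Df k m p) = frow k m p q := by
  ext v
  simpa using Df_apply k m p v q

lemma hasFDerivAt_cuspF (k m : ℕ) (p : Dom k m) :
    HasFDerivAt (cuspF k m) (Df k m p) p := by
  refine hasFDerivAt_euclidean fun q => ?_
  rw [proj_comp_eq_frow]
  have hz : HasFDerivAt (fun p : Dom k m => pz p) (PZ k m) p := (PZ k m).hasFDerivAt
  have hy : HasFDerivAt (fun p : Dom k m => py p) (PY k m) p := (PY k m).hasFDerivAt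
  have hx : ∀ j, HasFDerivAt (fun p : Dom k m => px p j) (PX k m j) p :=
    fun j => (PX k m j).hasFDerivAt
  rcases q with j | i | u | j
  · by_cases hj : j.1 < 2*k
    · have : (fun p : Dom k m => cuspF k m p (Sum.inl j)) = fun p => px p ⟨j.1, hj⟩ := by
        funext p; show (if h : j.1 < 2*k then px p ⟨j.1, h⟩ else py p) = _; rw [dif_pos hj]
      rw [this, frow, dif_pos hj]; exact hx _
    · have : (fun p : Dom k m => cuspF k m p (Sum.inl j)) = fun p => py p := by
        funext p; show (if h : j.1 < 2*k then px p ⟨j.1, h⟩ else py p) = _; rw [dif_neg hj]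
      rw [this, frow, dif_neg hj]; exact hy
  · have : (fun p : Dom k m => cuspF k m p (Sum.inr (Sum.inl i)))
        = fun p => pz p * px p (xo i) + (pz p * pz p) * px p (xe i) := by
      funext p
      show pz p * px p (xo i) + (pz p)^2 * px p (xe i) = _
      ring
    rw [this]
    have h := (hz.mul (hx (xo i))).add ((hz.mul hz).mul (hx (xe i)))
    refine h.congr_fderiv (Eq.symm ?_)
    refine ContinuousLinearMap.ext fun v => ?_
    show (frow k m p (Sum.inr (Sum.inl i))) v = _
    rw [frow]
    simp only [ContinuousLinearMap.add_apply, ContinuousLinearMap.coe_smul', Pi.smul_apply,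
      smul_eq_mul, Pi.mul_apply]
    ring
  · have : (fun p : Dom k m => cuspF k m p (Sum.inr (Sum.inr (Sum.inl u))))
        = fun p => pz p * py p + pz p * (pz p * pz p) := by
      funext p
      show pz p * py p + (pz p)^3 = _
      ring
    rw [this]
    have h := (hz.mul hy).add (hz.mul (hz.mul hz))
    refine h.congr_fderiv (Eq.symm ?_)
    refine ContinuousLinearMap.ext fun v => ?_
    show (frow k m p (Sum.inr (Sum.inr (Sum.inl u)))) v = _
    rw [frow]
    simp only [ContinuousLinearMap.add_apply, ContinuousLinearMap.coe_smul', Pi.smul_apply,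
      smul_eq_mul, Pi.mul_apply]
    ring
  · exact (PS k m j).hasFDerivAt

open ContinuousLinearMap

lemma denomA_ne (x : ℝ) : 1 + x^2 + x^4 ≠ 0 := by positivity
lemma denomB_ne (x : ℝ) : 1 + x^2 ≠ 0 := by positivity

lemma contDiff_coord (k m : ℕ) (j : DomIx k m) :
    ContDiff ℝ (⊤ : ℕ∞) (fun p : Dom k m => p j) :=
  (EuclideanSpace.proj (𝕜 := ℝ) j).contDiff

lemma contDiff_sigmaF (k m : ℕ) : ContDiff ℝ (⊤ : ℕ∞) (sigmaF k m) := by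
  rw [contDiff_euclidean]
  intro q
  have hz : ContDiff ℝ (⊤ : ℕ∞) (fun p : Dom k m => pz p) := contDiff_coord k m _
  have hx : ∀ j, ContDiff ℝ (⊤ : ℕ∞) (fun p : Dom k m => px p j) :=
    fun j => contDiff_coord k m _
  have hA : ContDiff ℝ (⊤ : ℕ∞) (fun p : Dom k m => 1 + (pz p)^2 + (pz p)^4) :=
    (contDiff_const.add (hz.pow 2)).add (hz.pow 4)
  have hB : ContDiff ℝ (⊤ : ℕ∞) (fun p : Dom k m => 1 + (pz p)^2) :=
    contDiff_const.add (hz.pow 2)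
  have hAne : ∀ p : Dom k m, 1 + (pz p)^2 + (pz p)^4 ≠ 0 := fun p => denomA_ne _
  have hBne : ∀ p : Dom k m, 1 + (pz p)^2 ≠ 0 := fun p => denomB_ne _
  rcases q with j | i | u | j
  · by_cases hj : j.1 < 2*k
    · by_cases hj2 : j.1 % 2 = 0
      · have : (fun p : Dom k m => sigmaF k m p (Sum.inl j))
            = fun p => -2 * pz p * px p ⟨j.1+1, by omega⟩ / (1 + (pz p)^2 + (pz p)^4) := by
          funext p
          show (if h : j.1 < 2*k then _ else _) = _
          rw [dif_pos hj, dif_pos hj2]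
        rw [this]
        exact (((contDiff_const.mul hz).mul (hx _)).div hA hAne)
      · have : (fun p : Dom k m => sigmaF k m p (Sum.inl j))
            = fun p => -2 * (pz p)^2 * px p ⟨j.1, hj⟩ / (1 + (pz p)^2 + (pz p)^4) := by
          funext p
          show (if h : j.1 < 2*k then _ else _) = _
          rw [dif_pos hj, dif_neg hj2]
        rw [this]
        exact (((contDiff_const.mul (hz.pow 2)).mul (hx _)).div hA hAne)
    · have : (fun p : Dom k m => sigmaF k m p (Sum.inl j))
          = fun p => -6 * (pz p)^2 / (1 + (pz p)^2) := by
        funext p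
        show (if h : j.1 < 2*k then _ else _) = _
        rw [dif_neg hj]
      rw [this]
      exact ((contDiff_const.mul (hz.pow 2)).div hB hBne)
  · exact ((contDiff_const.mul (hx (xe i))).div hA hAne)
  · exact ((contDiff_const.mul hz).div hB hBne)
  · exact contDiff_const
def srow (k m : ℕ) : CodIx k m → (Dom k m →L[ℝ] ℝ)
  | Sum.inl _ => 0
  | Sum.inr (Sum.inl i) => (2:ℝ) • PX k m (xe i)
  | Sum.inr (Sum.inr (Sum.inl _)) => (6:ℝ) • PZ k m
  | Sum.inr (Sum.inr (Sum.inr _)) => 0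

def Dsig (k m : ℕ) : Dom k m →L[ℝ] Cod k m :=
  ∑ q, (srow k m q).smulRight (EuclideanSpace.single q 1)

lemma Dsig_apply (k m : ℕ) (v : Dom k m) (q : CodIx k m) :
    Dsig k m v q = srow k m q v := by
  rcases q with j | i | u | j <;>
    simp [Dsig, ContinuousLinearMap.sum_apply, coord_sum, EuclideanSpace.single_apply]

@[simp] lemma px_pOfS (k m : ℕ) (s : Fin m → ℝ) (j : Fin (2*k)) : px (pOfS k m s) j = 0 := rfl
@[simp] lemma py_pOfS (k m : ℕ) (s : Fin m → ℝ) : py (pOfS k m s) = 0 := rfl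
@[simp] lemma pz_pOfS (k m : ℕ) (s : Fin m → ℝ) : pz (pOfS k m s) = 0 := rfl

lemma hasFDerivAt_sigmaF (k m : ℕ) (s : Fin m → ℝ) :
    HasFDerivAt (sigmaF k m) (Dsig k m) (pOfS k m s) := by
  set p₀ := pOfS k m s with hp₀
  refine hasFDerivAt_euclidean fun q => ?_
  have hrow : (EuclideanSpace.proj q).comp (Dsig k m) = srow k m q := by
    ext v; simpa using Dsig_apply k m v q
  rw [hrow]
  have hz : HasFDerivAt (fun p : Dom k m => pz p) (PZ k m) p₀ := (PZ k m).hasFDerivAt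
  have hx : ∀ j, HasFDerivAt (fun p : Dom k m => px p j) (PX k m j) p₀ :=
    fun j => (PX k m j).hasFDerivAt
  -- inverse of denominators
  have hA : HasFDerivAt (fun p : Dom k m => 1 + pz p * pz p + pz p * pz p * (pz p * pz p))
      ((0 : Dom k m →L[ℝ] ℝ)) p₀ := by
    have h := ((hasFDerivAt_const (1:ℝ) p₀).add (hz.mul hz)).add ((hz.mul hz).mul (hz.mul hz))
    refine h.congr_fderiv (Eq.symm ?_)
    refine ContinuousLinearMap.ext fun v => ?_
    simp [hp₀]
  have hAinv : HasFDerivAt (fun p : Dom k m =>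
      (1 + pz p * pz p + pz p * pz p * (pz p * pz p))⁻¹) ((0 : Dom k m →L[ℝ] ℝ)) p₀ := by
    have hne : (1 + pz p₀ * pz p₀ + pz p₀ * pz p₀ * (pz p₀ * pz p₀)) ≠ 0 := by
      norm_num [hp₀]
    have h := (hasDerivAt_inv hne).comp_hasFDerivAt p₀ hA
    simpa [Function.comp_def] using h
  have hB : HasFDerivAt (fun p : Dom k m => 1 + pz p * pz p)
      ((0 : Dom k m →L[ℝ] ℝ)) p₀ := by
    have h := (hasFDerivAt_const (1:ℝ) p₀).add (hz.mul hz)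
    refine h.congr_fderiv (Eq.symm ?_)
    refine ContinuousLinearMap.ext fun v => ?_
    simp [hp₀]
  have hBinv : HasFDerivAt (fun p : Dom k m => (1 + pz p * pz p)⁻¹)
      ((0 : Dom k m →L[ℝ] ℝ)) p₀ := by
    have hne : (1 + pz p₀ * pz p₀) ≠ 0 := by norm_num [hp₀]
    have h := (hasDerivAt_inv hne).comp_hasFDerivAt p₀ hB
    simpa [Function.comp_def] using h
  rcases q with j | i | u | j
  · by_cases hj : j.1 < 2*k
    · by_cases hj2 : j.1 % 2 = 0
      · have hfun : (fun p : Dom k m => sigmaF k m p (Sum.inl j))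
            = fun p => (-2 * pz p * px p ⟨j.1+1, by omega⟩)
                * (1 + pz p * pz p + pz p * pz p * (pz p * pz p))⁻¹ := by
          funext p
          show (if h : j.1 < 2*k then _ else _) = _
          rw [dif_pos hj, dif_pos hj2, div_eq_mul_inv]
          ring_nf
        rw [hfun, srow]
        have h := (((hasFDerivAt_const (-2:ℝ) p₀).mul hz).mul (hx ⟨j.1+1, by omega⟩)).mul hAinv
        refine h.congr_fderiv (Eq.symm ?_)
        refine ContinuousLinearMap.ext fun v => ?_
        simp [hp₀]
      · have hfun : (fun p : Dom k m => sigmaF k m p (Sum.inl j))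
            = fun p => (-2 * (pz p * pz p) * px p ⟨j.1, hj⟩)
                * (1 + pz p * pz p + pz p * pz p * (pz p * pz p))⁻¹ := by
          funext p
          show (if h : j.1 < 2*k then _ else _) = _
          rw [dif_pos hj, dif_neg hj2, div_eq_mul_inv]
          ring_nf
        rw [hfun, srow]
        have h := (((hasFDerivAt_const (-2:ℝ) p₀).mul (hz.mul hz)).mul (hx ⟨j.1, hj⟩)).mul hAinv
        refine h.congr_fderiv (Eq.symm ?_)
        refine ContinuousLinearMap.ext fun v => ?_
        simp [hp₀]
    · have hfun : (fun p : Dom k m => sigmaF k m p (Sum.inl j))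
          = fun p => (-6 * (pz p * pz p)) * (1 + pz p * pz p)⁻¹ := by
        funext p
        show (if h : j.1 < 2*k then _ else _) = _
        rw [dif_neg hj, div_eq_mul_inv]
        ring_nf
      rw [hfun, srow]
      have h := ((hasFDerivAt_const (-6:ℝ) p₀).mul (hz.mul hz)).mul hBinv
      refine h.congr_fderiv (Eq.symm ?_)
      refine ContinuousLinearMap.ext fun v => ?_
      simp [hp₀]
  · have hfun : (fun p : Dom k m => sigmaF k m p (Sum.inr (Sum.inl i)))
        = fun p => (2 * px p (xe i))
            * (1 + pz p * pz p + pz p * pz p * (pz p * pz p))⁻¹ := by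
      funext p
      show 2 * px p (xe i) / (1 + (pz p)^2 + (pz p)^4) = _
      rw [div_eq_mul_inv]
      ring_nf
    rw [hfun, srow]
    have h := ((hasFDerivAt_const (2:ℝ) p₀).mul (hx (xe i))).mul hAinv
    refine h.congr_fderiv (Eq.symm ?_)
    refine ContinuousLinearMap.ext fun v => ?_
    simp [hp₀]
  · have hfun : (fun p : Dom k m => sigmaF k m p (Sum.inr (Sum.inr (Sum.inl u))))
        = fun p => (6 * pz p) * (1 + pz p * pz p)⁻¹ := by
      funext p
      show 6 * pz p / (1 + (pz p)^2) = _
      rw [div_eq_mul_inv]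
      ring_nf
    rw [hfun, srow]
    have h := ((hasFDerivAt_const (6:ℝ) p₀).mul hz).mul hBinv
    refine h.congr_fderiv (Eq.symm ?_)
    refine ContinuousLinearMap.ext fun v => ?_
    simp [hp₀]
  · exact hasFDerivAt_const _ _
lemma sigmaF_pOfS (k m : ℕ) (s : Fin m → ℝ) : sigmaF k m (pOfS k m s) = 0 := by
  ext q
  rcases q with j | i | u | j
  · show (if h : j.1 < 2*k then if h2 : j.1 % 2 = 0 then
        -2 * pz (pOfS k m s) * px (pOfS k m s) ⟨j.1+1, by omega⟩
          / (1 + (pz (pOfS k m s))^2 + (pz (pOfS k m s))^4)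
      else -2 * (pz (pOfS k m s))^2 * px (pOfS k m s) ⟨j.1, h⟩
          / (1 + (pz (pOfS k m s))^2 + (pz (pOfS k m s))^4)
      else -6 * (pz (pOfS k m s))^2 / (1 + (pz (pOfS k m s))^2)) = 0
    by_cases hj : j.1 < 2*k
    · by_cases hj2 : j.1 % 2 = 0 <;> simp [hj, hj2]
    · simp [hj]
  · show 2 * px (pOfS k m s) (xe i) / (1 + (pz (pOfS k m s))^2 + (pz (pOfS k m s))^4) = 0
    simp
  · show 6 * pz (pOfS k m s) / (1 + (pz (pOfS k m s))^2) = 0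
    simp
  · rfl

open ContinuousLinearMap in
lemma fderiv_ftilde (k m : ℕ) (q : Dom k m × ℝ) :
    fderiv ℝ (ftilde k m) q =
      (Df k m q.1).comp (fst ℝ (Dom k m) ℝ)
        + (q.2 • ((fderiv ℝ (sigmaF k m) q.1).comp (fst ℝ (Dom k m) ℝ))
            + (snd ℝ (Dom k m) ℝ).smulRight (sigmaF k m q.1)) := by
  have h1 : HasFDerivAt (fun q : Dom k m × ℝ => cuspF k m q.1)
      ((Df k m q.1).comp (fst ℝ (Dom k m) ℝ)) q :=
    (hasFDerivAt_cuspF k m q.1).comp q hasFDerivAt_fst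
  have hσd : HasFDerivAt (sigmaF k m) (fderiv ℝ (sigmaF k m) q.1) q.1 :=
    (((contDiff_sigmaF k m).differentiable (by simp)) q.1).hasFDerivAt
  have hσ : HasFDerivAt (fun q : Dom k m × ℝ => sigmaF k m q.1)
      ((fderiv ℝ (sigmaF k m) q.1).comp (fst ℝ (Dom k m) ℝ)) q :=
    hσd.comp q hasFDerivAt_fst
  have h2 := (hasFDerivAt_snd (𝕜 := ℝ) (E := Dom k m) (F := ℝ) (p := q)).smul hσ
  have hft : ftilde k m = fun q : Dom k m × ℝ => cuspF k m q.1 + q.2 • sigmaF k m q.1 := rfl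
  rw [hft]
  exact (h1.add h2).fderiv

open ContinuousLinearMap in
lemma D0_apply (k m : ℕ) (s : Fin m → ℝ) (w : Dom k m) (b : ℝ) (q : CodIx k m) :
    (fderiv ℝ (ftilde k m) (pOfS k m s, 0) (w, b)) q = frow k m (pOfS k m s) q w := by
  rw [fderiv_ftilde]
  simp [sigmaF_pOfS, Df_apply, PiLp.add_apply]
lemma ker_eq (k m : ℕ) (s : Fin m → ℝ) :
    Kspan k m = LinearMap.ker (fderiv ℝ (ftilde k m) (pOfS k m s, 0) : Dom k m × ℝ →ₗ[ℝ] Cod k m) := by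
  apply le_antisymm
  · rw [Kspan, Submodule.span_le]
    intro v hv
    rcases Set.mem_insert_iff.1 hv with rfl | hv
    · -- (ez, 0)
      simp only [SetLike.mem_coe, LinearMap.mem_ker]
      ext q
      rw [show ((0:Cod k m) q = 0) from rfl]
      rw [ContinuousLinearMap.coe_coe, D0_apply]
      rcases q with j | i | u | j
      · by_cases hj : j.1 < 2*k
        · simp [frow, hj, ez, EuclideanSpace.single_apply, zI]
        · simp [frow, hj, ez, EuclideanSpace.single_apply, yI]
      · simp [frow]
      · simp [frow]
      · simp [frow, ez, EuclideanSpace.single_apply, sI]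
    · rcases Set.mem_singleton_iff.1 hv with rfl
      simp only [SetLike.mem_coe, LinearMap.mem_ker]
      ext q
      rw [show ((0:Cod k m) q = 0) from rfl]
      rw [ContinuousLinearMap.coe_coe, D0_apply]
      rcases q with j | i | u | j
      · by_cases hj : j.1 < 2*k <;> simp [frow, hj]
      · simp [frow]
      · simp [frow]
      · simp [frow]
  · rintro ⟨w, b⟩ hv
    rw [LinearMap.mem_ker] at hv
    have hc : ∀ q, (fderiv ℝ (ftilde k m) (pOfS k m s, 0) (w, b)) q = 0 :=
      fun q => congrArg (fun x : Cod k m => x q) hv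
    have hXall : ∀ j : Fin (2*k+1), frow k m (pOfS k m s) (Sum.inl j) w = 0 :=
      fun j => by rw [← D0_apply k m s w b]; exact hc _
    have hx : ∀ j : Fin (2*k), w (Sum.inl j) = 0 := by
      intro j
      have := hXall ⟨j.1, by omega⟩
      rw [frow] at this
      rw [dif_pos j.2] at this
      simpa using this
    have hy : w (yI k m) = 0 := by
      have := hXall ⟨2*k, by omega⟩
      rw [frow] at this
      rw [dif_neg (by simp)] at this
      simpa using this
    have hs : ∀ j : Fin m, w (sI k m j) = 0 := by
      intro j
      have := hc (Sum.inr (Sum.inr (Sum.inr j)))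
      rw [D0_apply, frow] at this
      simpa using this
    rw [Kspan]
    refine Submodule.mem_span_pair.2 ⟨w (zI k m), b, ?_⟩
    refine Prod.ext ?_ (by simp)
    show w (zI k m) • ez k m + b • (0 : Dom k m) = w
    ext j
    rcases j with j | u | u | j
    · simp [ez, EuclideanSpace.single_apply, PiLp.add_apply, PiLp.smul_apply, hx]
    · simp [ez, EuclideanSpace.single_apply, PiLp.add_apply, PiLp.smul_apply, hy, yI]
    · simp [ez, EuclideanSpace.single_apply, PiLp.add_apply, PiLp.smul_apply, zI]
    · simp [ez, EuclideanSpace.single_apply, PiLp.add_apply, PiLp.smul_apply, hs, sI]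
def preim (k m : ℕ) (u : Cod k m) : Dom k m :=
  (EuclideanSpace.equiv (DomIx k m) ℝ).symm fun j =>
    match j with
    | Sum.inl j => u (Sum.inl ⟨j.1, by omega⟩)
    | Sum.inr (Sum.inl _) => u (Sum.inl ⟨2*k, by omega⟩)
    | Sum.inr (Sum.inr (Sum.inl _)) => 0
    | Sum.inr (Sum.inr (Sum.inr j)) => u (Sum.inr (Sum.inr (Sum.inr j)))

lemma eY_mem (k m : ℕ) (i : Fin k) : eY k m i ∈ Cspan k m :=
  Submodule.subset_span (Set.mem_insert_iff.2 (Or.inr (Set.mem_range_self i)))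

lemma eZ_mem (k m : ℕ) : eZ k m ∈ Cspan k m :=
  Submodule.subset_span (Set.mem_insert _ _)

lemma range_eq (k m : ℕ) (s : Fin m → ℝ) :
    LinearMap.range (fderiv ℝ (ftilde k m) (pOfS k m s, 0) : Dom k m × ℝ →ₗ[ℝ] Cod k m) = (Cspan k m)ᗮ := by
  apply le_antisymm
  · rintro x ⟨v, rfl⟩
    rw [Submodule.mem_orthogonal]
    intro u hu
    obtain ⟨w, b⟩ := v
    induction hu using Submodule.span_induction with
    | mem x hx =>
        rcases Set.mem_insert_iff.1 hx with rfl | ⟨i, rfl⟩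
        · rw [eZ, EuclideanSpace.inner_single_left]
          rw [ContinuousLinearMap.coe_coe, D0_apply]
          simp [frow]
        · rw [eY, EuclideanSpace.inner_single_left]
          rw [ContinuousLinearMap.coe_coe, D0_apply]
          simp [frow]
    | zero => simp
    | add x y hx hy ihx ihy => rw [inner_add_left, ihx, ihy]; simp
    | smul a x hx ih => rw [inner_smul_left, ih]; simp
  · intro u hu
    rw [Submodule.mem_orthogonal] at hu
    have hY : ∀ i : Fin k, u (Sum.inr (Sum.inl i)) = 0 := by
      intro i
      have := hu (eY k m i) (eY_mem k m i)
      rwa [eY, EuclideanSpace.inner_single_left, starRingEnd_apply, star_one, one_mul] at this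
    have hZ : u (Sum.inr (Sum.inr (Sum.inl ()))) = 0 := by
      have := hu (eZ k m) (eZ_mem k m)
      rwa [eZ, EuclideanSpace.inner_single_left, starRingEnd_apply, star_one, one_mul] at this
    refine ⟨(preim k m u, 0), ?_⟩
    ext q
    rw [ContinuousLinearMap.coe_coe, D0_apply]
    rcases q with j | i | w | j
    · by_cases hj : j.1 < 2*k
      · rw [frow, dif_pos hj]
        exact congrArg u (congrArg Sum.inl (Fin.ext rfl))
      · rw [frow, dif_neg hj]
        have hval : j.1 = 2*k := by have := j.isLt; omega
        exact congrArg u (congrArg Sum.inl (Fin.ext (by simp [hval])))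
    · rw [frow]
      simp [hY i]
    · rw [frow]
      simp [hZ]
    · rfl

lemma orth_eq (k m : ℕ) (s : Fin m → ℝ) :
    Cspan k m = (LinearMap.range (fderiv ℝ (ftilde k m) (pOfS k m s, 0) : Dom k m × ℝ →ₗ[ℝ] Cod k m))ᗮ := by
  rw [range_eq, Submodule.orthogonal_orthogonal]
def drow (k m : ℕ) : CodIx k m → (Dom k m →L[ℝ] (Dom k m →L[ℝ] ℝ))
  | Sum.inl _ => 0
  | Sum.inr (Sum.inl i) =>
      (PZ k m).smulRight (PX k m (xo i)) + (PX k m (xo i)).smulRight (PZ k m)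
  | Sum.inr (Sum.inr (Sum.inl _)) =>
      (PZ k m).smulRight (PY k m) + (PY k m).smulRight (PZ k m)
  | Sum.inr (Sum.inr (Sum.inr _)) => 0

lemma hasFDerivAt_frow (k m : ℕ) (s : Fin m → ℝ) (q : CodIx k m) :
    HasFDerivAt (fun p => frow k m p q) (drow k m q) (pOfS k m s) := by
  set p₀ := pOfS k m s with hp₀
  have hz : HasFDerivAt (fun p : Dom k m => pz p) (PZ k m) p₀ := (PZ k m).hasFDerivAt
  have hy : HasFDerivAt (fun p : Dom k m => py p) (PY k m) p₀ := (PY k m).hasFDerivAt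
  have hx : ∀ j, HasFDerivAt (fun p : Dom k m => px p j) (PX k m j) p₀ :=
    fun j => (PX k m j).hasFDerivAt
  rcases q with j | i | u | j
  · exact hasFDerivAt_const _ _
  · have hfun : (fun p => frow k m p (Sum.inr (Sum.inl i)))
        = fun p : Dom k m => (pz p • PX k m (xo i) + (pz p * pz p) • PX k m (xe i))
            + (px p (xo i) + 2 * pz p * px p (xe i)) • PZ k m := by
      funext p
      rw [frow, pow_two]
    rw [hfun, drow]
    have h1 := hz.smul_const (PX k m (xo i))
    have h2 := (hz.mul hz).smul_const (PX k m (xe i))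
    have h3 := ((hx (xo i)).add (((hasFDerivAt_const (2:ℝ) p₀).mul hz).mul
      (hx (xe i)))).smul_const (PZ k m)
    refine ((h1.add h2).add h3).congr_fderiv (Eq.symm ?_)
    refine ContinuousLinearMap.ext fun u => ?_
    refine ContinuousLinearMap.ext fun v => ?_
    simp [hp₀]
  · have hfun : (fun p => frow k m p (Sum.inr (Sum.inr (Sum.inl u))))
        = fun p : Dom k m => pz p • PY k m + (py p + 3 * (pz p * pz p)) • PZ k m := by
      funext p
      rw [frow, pow_two]
    rw [hfun, drow]
    have h1 := hz.smul_const (PY k m)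
    have h2 := (hy.add ((hasFDerivAt_const (3:ℝ) p₀).mul (hz.mul hz))).smul_const (PZ k m)
    refine (h1.add h2).congr_fderiv (Eq.symm ?_)
    refine ContinuousLinearMap.ext fun u => ?_
    refine ContinuousLinearMap.ext fun v => ?_
    simp [hp₀]
  · exact hasFDerivAt_const _ _

open ContinuousLinearMap in
def D2f (k m : ℕ) : Dom k m →L[ℝ] (Dom k m →L[ℝ] Cod k m) :=
  ∑ q, ((smulRightL ℝ (Dom k m) (Cod k m)).flip (EuclideanSpace.single q 1)).comp (drow k m q)

open ContinuousLinearMap in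
lemma smulRightL_eval (k m : ℕ) (c : Dom k m →L[ℝ] ℝ) (f : Cod k m) :
    (smulRightL ℝ (Dom k m) (Cod k m)) c f = c.smulRight f := rfl

open ContinuousLinearMap in
lemma D2f_apply (k m : ℕ) (u w : Dom k m) (q : CodIx k m) :
    (D2f k m u w) q = drow k m q u w := by
  rcases q with j | i | z | j <;>
    simp [D2f, ContinuousLinearMap.sum_apply, coord_sum, smulRightL_eval,
      ContinuousLinearMap.flip_apply, EuclideanSpace.single_apply]

open ContinuousLinearMap in
lemma hasFDerivAt_Df (k m : ℕ) (s : Fin m → ℝ) :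
    HasFDerivAt (Df k m) (D2f k m) (pOfS k m s) := by
  have hDf : Df k m = fun p => ∑ q : CodIx k m,
      ((smulRightL ℝ (Dom k m) (Cod k m)).flip (EuclideanSpace.single q 1)) (frow k m p q) :=
    rfl
  rw [hDf, D2f]
  exact HasFDerivAt.fun_sum fun q _ =>
    ((smulRightL ℝ (Dom k m) (Cod k m)).flip (EuclideanSpace.single q 1)).hasFDerivAt.comp _
      (hasFDerivAt_frow k m s q)
open ContinuousLinearMap in
lemma c1_eval (k m : ℕ) (A : Dom k m →L[ℝ] Cod k m) :
    ((compL ℝ (Dom k m × ℝ) (Dom k m) (Cod k m)).flip (fst ℝ (Dom k m) ℝ)) A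
      = A.comp (fst ℝ (Dom k m) ℝ) := rfl

open ContinuousLinearMap in
lemma smulRightL_eval' (k m : ℕ) (c : (Dom k m × ℝ) →L[ℝ] ℝ) (f : Cod k m) :
    (smulRightL ℝ (Dom k m × ℝ) (Cod k m)) c f = c.smulRight f := rfl

open ContinuousLinearMap in
lemma fderiv2_spec (k m : ℕ) (s : Fin m → ℝ) :
    DifferentiableAt ℝ (fun q : Dom k m × ℝ => fderiv ℝ (ftilde k m) q) (pOfS k m s, 0) ∧
    ∀ (u w : Dom k m) (b : ℝ),
      (fderiv ℝ (fun q : Dom k m × ℝ => fderiv ℝ (ftilde k m) q) (pOfS k m s, 0) (u, 0)) (w, b)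
        = D2f k m u w + b • Dsig k m u := by
  have hc1 : ∀ q : Dom k m × ℝ,
      ((compL ℝ (Dom k m × ℝ) (Dom k m) (Cod k m)).flip (fst ℝ (Dom k m) ℝ))
        (fderiv ℝ (sigmaF k m) q.1)
      = (fderiv ℝ (sigmaF k m) q.1).comp (fst ℝ (Dom k m) ℝ) := fun _ => rfl
  set c1 := (compL ℝ (Dom k m × ℝ) (Dom k m) (Cod k m)).flip (fst ℝ (Dom k m) ℝ) with hc1def
  have hT1 : HasFDerivAt (fun q : Dom k m × ℝ => c1 (Df k m q.1))
      (c1.comp ((D2f k m).comp (fst ℝ (Dom k m) ℝ))) (pOfS k m s, 0) :=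
    by have h := (hasFDerivAt_Df k m s).comp (f := (Prod.fst : Dom k m × ℝ → Dom k m)) (pOfS k m s, (0:ℝ)) hasFDerivAt_fst
       exact c1.hasFDerivAt.comp _ h
  have hfd : DifferentiableAt ℝ (fderiv ℝ (sigmaF k m)) (pOfS k m s) := by
    have h1 : ContDiff ℝ 1 (fderiv ℝ (sigmaF k m)) :=
      (contDiff_sigmaF k m).fderiv_right (by exact WithTop.coe_le_coe.2 le_top)
    exact (h1.differentiable one_ne_zero).differentiableAt
  have hG : DifferentiableAt ℝ (fun q : Dom k m × ℝ => c1 (fderiv ℝ (sigmaF k m) q.1))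
      (pOfS k m s, 0) := by
    have hcomp : DifferentiableAt ℝ (fun q : Dom k m × ℝ => fderiv ℝ (sigmaF k m) q.1)
        (pOfS k m s, 0) := DifferentiableAt.comp (pOfS k m s, (0:ℝ)) hfd differentiableAt_fst
    exact c1.differentiableAt.comp (pOfS k m s, (0:ℝ)) hcomp
  have hT2 := (hasFDerivAt_snd (𝕜 := ℝ) (E := Dom k m) (F := ℝ)
    (p := (pOfS k m s, 0))).fun_smul hG.hasFDerivAt
  have hT3 : HasFDerivAt
      (fun q : Dom k m × ℝ => (smulRightL ℝ (Dom k m × ℝ) (Cod k m)) (snd ℝ (Dom k m) ℝ)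
        (sigmaF k m q.1))
      (((smulRightL ℝ (Dom k m × ℝ) (Cod k m)) (snd ℝ (Dom k m) ℝ)).comp
        ((Dsig k m).comp (fst ℝ (Dom k m) ℝ))) (pOfS k m s, 0) :=
    by have h := (hasFDerivAt_sigmaF k m s).comp (f := (Prod.fst : Dom k m × ℝ → Dom k m)) (pOfS k m s, (0:ℝ)) hasFDerivAt_fst
       exact ((smulRightL ℝ (Dom k m × ℝ) (Cod k m)) (snd ℝ (Dom k m) ℝ)).hasFDerivAt.comp _ h
  have htot := hT1.fun_add (hT2.fun_add hT3)
  have hfun : (fun q : Dom k m × ℝ => fderiv ℝ (ftilde k m) q)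
      = fun q : Dom k m × ℝ => c1 (Df k m q.1)
          + (q.2 • c1 (fderiv ℝ (sigmaF k m) q.1)
            + (smulRightL ℝ (Dom k m × ℝ) (Cod k m)) (snd ℝ (Dom k m) ℝ) (sigmaF k m q.1)) := by
    funext q
    rw [fderiv_ftilde]
    rfl
  rw [← hfun] at htot
  refine ⟨htot.differentiableAt, fun u w b => ?_⟩
  rw [htot.fderiv]
  have hsig : fderiv ℝ (sigmaF k m) (pOfS k m s) = Dsig k m := (hasFDerivAt_sigmaF k m s).fderiv
  simp only [ContinuousLinearMap.add_apply, ContinuousLinearMap.comp_apply,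
    ContinuousLinearMap.coe_fst', ContinuousLinearMap.coe_snd',
    ContinuousLinearMap.smul_apply, ContinuousLinearMap.smulRight_apply, c1_eval,
    smulRightL_eval', hc1def]
  simp [hsig]
lemma Cspan_coords (k m : ℕ) {w : Cod k m} (hw : w ∈ Cspan k m) :
    (∀ j : Fin (2*k+1), w (Sum.inl j) = 0) ∧
      (∀ j : Fin m, w (Sum.inr (Sum.inr (Sum.inr j))) = 0) := by
  induction hw using Submodule.span_induction with
  | mem x hx =>
      rcases Set.mem_insert_iff.1 hx with rfl | ⟨i, rfl⟩
      · exact ⟨fun j => by simp [eZ, EuclideanSpace.single_apply],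
          fun j => by simp [eZ, EuclideanSpace.single_apply]⟩
      · exact ⟨fun j => by simp [eY, EuclideanSpace.single_apply],
          fun j => by simp [eY, EuclideanSpace.single_apply]⟩
  | zero => exact ⟨fun j => rfl, fun j => rfl⟩
  | add x y hx hy ihx ihy =>
      exact ⟨fun j => by rw [PiLp.add_apply, ihx.1 j, ihy.1 j, add_zero],
        fun j => by rw [PiLp.add_apply, ihx.2 j, ihy.2 j, add_zero]⟩
  | smul a x hx ih =>
      exact ⟨fun j => by rw [PiLp.smul_apply, ih.1 j, smul_zero],
        fun j => by rw [PiLp.smul_apply, ih.2 j, smul_zero]⟩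

def uchoice (k m : ℕ) (a b : Cod k m) : Dom k m :=
  (EuclideanSpace.equiv (DomIx k m) ℝ).symm fun j =>
    match j with
    | Sum.inl j => if j.1 % 2 = 0
        then a (Sum.inr (Sum.inl ⟨j.1/2, by have := j.isLt; omega⟩))
        else b (Sum.inr (Sum.inl ⟨j.1/2, by have := j.isLt; omega⟩)) / 2
    | Sum.inr (Sum.inl _) => a (Sum.inr (Sum.inr (Sum.inl ())))
    | Sum.inr (Sum.inr (Sum.inl _)) => b (Sum.inr (Sum.inr (Sum.inl ()))) / 6
    | Sum.inr (Sum.inr (Sum.inr _)) => 0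

lemma uchoice_xo (k m : ℕ) (a b : Cod k m) (i : Fin k) :
    uchoice k m a b (Sum.inl (xo i)) = a (Sum.inr (Sum.inl i)) := by
  show (if (xo i).1 % 2 = 0
      then a (Sum.inr (Sum.inl ⟨(xo i).1/2, by have := (xo i).isLt; omega⟩))
      else b (Sum.inr (Sum.inl ⟨(xo i).1/2, by have := (xo i).isLt; omega⟩)) / 2) = _
  rw [if_pos (by show (2*i.1) % 2 = 0; omega)]
  exact congrArg a (congrArg (fun t => Sum.inr (Sum.inl t))
    (Fin.ext (by show (2*i.1)/2 = i.1; omega)))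

lemma uchoice_xe (k m : ℕ) (a b : Cod k m) (i : Fin k) :
    uchoice k m a b (Sum.inl (xe i)) = b (Sum.inr (Sum.inl i)) / 2 := by
  show (if (xe i).1 % 2 = 0
      then a (Sum.inr (Sum.inl ⟨(xe i).1/2, by have := (xe i).isLt; omega⟩))
      else b (Sum.inr (Sum.inl ⟨(xe i).1/2, by have := (xe i).isLt; omega⟩)) / 2) = _
  rw [if_neg (by show ¬ (2*i.1+1) % 2 = 0; omega)]
  exact congrArg (fun t => b t / 2) (congrArg (fun t => Sum.inr (Sum.inl t))
    (Fin.ext (by show (2*i.1+1)/2 = i.1; omega)))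

lemma uchoice_y (k m : ℕ) (a b : Cod k m) :
    uchoice k m a b (yI k m) = a (Sum.inr (Sum.inr (Sum.inl ()))) := rfl

lemma uchoice_z (k m : ℕ) (a b : Cod k m) :
    uchoice k m a b (zI k m) = b (Sum.inr (Sum.inr (Sum.inl ()))) / 6 := rfl

lemma eval_gen1 (k m : ℕ) (a b : Cod k m) (ha : a ∈ Cspan k m) :
    D2f k m (uchoice k m a b) (ez k m) + (0:ℝ) • Dsig k m (uchoice k m a b) = a := by
  rw [zero_smul, add_zero]
  ext q
  rw [D2f_apply]
  rcases q with j | i | z | j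
  · rw [(Cspan_coords k m ha).1 j]; rfl
  · rw [drow]
    simp only [ContinuousLinearMap.add_apply, ContinuousLinearMap.smulRight_apply,
      smul_eq_mul]
    have h1 : (ez k m) (Sum.inl (xo i)) = 0 := by
      simp [ez, EuclideanSpace.single_apply, zI]
    have h2 : (ez k m) (zI k m) = 1 := by
      simp [ez, EuclideanSpace.single_apply, zI]
    show uchoice k m a b (zI k m) * (ez k m) (Sum.inl (xo i))
        + uchoice k m a b (Sum.inl (xo i)) * (ez k m) (zI k m) = _
    rw [h1, h2, uchoice_xo]
    ring
  · rw [drow]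
    simp only [ContinuousLinearMap.add_apply, ContinuousLinearMap.smulRight_apply,
      smul_eq_mul]
    have h1 : (ez k m) (yI k m) = 0 := by
      simp [ez, EuclideanSpace.single_apply, zI, yI]
    have h2 : (ez k m) (zI k m) = 1 := by
      simp [ez, EuclideanSpace.single_apply, zI]
    show uchoice k m a b (zI k m) * (ez k m) (yI k m)
        + uchoice k m a b (yI k m) * (ez k m) (zI k m) = _
    rw [h1, h2, uchoice_y]
    ring
  · rw [(Cspan_coords k m ha).2 j]; rfl

lemma eval_gen2 (k m : ℕ) (a b : Cod k m) (hb : b ∈ Cspan k m) :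
    D2f k m (uchoice k m a b) 0 + (1:ℝ) • Dsig k m (uchoice k m a b) = b := by
  rw [(D2f k m (uchoice k m a b)).map_zero, zero_add, one_smul]
  ext q
  rw [Dsig_apply]
  rcases q with j | i | z | j
  · rw [(Cspan_coords k m hb).1 j]; rfl
  · rw [srow]
    simp only [ContinuousLinearMap.coe_smul', Pi.smul_apply, smul_eq_mul]
    show 2 * uchoice k m a b (Sum.inl (xe i)) = _
    rw [uchoice_xe]
    ring
  · rw [srow]
    simp only [ContinuousLinearMap.coe_smul', Pi.smul_apply, smul_eq_mul]
    show 6 * uchoice k m a b (zI k m) = _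
    rw [uchoice_z]
    ring
  · rw [(Cspan_coords k m hb).2 j]; rfl
end S8

/-- at `q₀ = ((0,0,0,s), 0)`, (i) `K` is the kernel of `Df̃_{q₀}` and `C` is the
orthogonal complement of the range of `Df̃_{q₀}`; (ii) the map `Φ : q ↦ Df̃_q` is
differentiable at `q₀`, and the linear map `T : ℝⁿ × ℝ → Hom(K, C)`,
`T(v)(κ) = proj_C ((DΦ_{q₀}(v))(κ))`, is surjective. -/
theorem statement8 (k m : ℕ) (hk : 1 ≤ k) (s : Fin m → ℝ) :
    Kspan k m = LinearMap.ker (fderiv ℝ (ftilde k m) (pOfS k m s, 0) : Dom k m × ℝ →ₗ[ℝ] Cod k m) ∧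
    Cspan k m = (LinearMap.range (fderiv ℝ (ftilde k m) (pOfS k m s, 0) : Dom k m × ℝ →ₗ[ℝ] Cod k m))ᗮ ∧
    DifferentiableAt ℝ (fun q => fderiv ℝ (ftilde k m) q) (pOfS k m s, 0) ∧
    ∀ L : Kspan k m →ₗ[ℝ] Cspan k m, ∃ v : Dom k m × ℝ, ∀ κ : Kspan k m,
      (Cspan k m).orthogonalProjectionOnto
          ((fderiv ℝ (fun q => fderiv ℝ (ftilde k m) q) (pOfS k m s, 0) v) (κ : Dom k m × ℝ))
        = L κ := by
  refine ⟨S8.ker_eq k m s, S8.orth_eq k m s, (S8.fderiv2_spec k m s).1, ?_⟩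
  intro L
  have memK1 : ((ez k m, 0) : Dom k m × ℝ) ∈ Kspan k m :=
    Submodule.subset_span (Set.mem_insert _ _)
  have memK2 : (((0 : Dom k m), 1) : Dom k m × ℝ) ∈ Kspan k m :=
    Submodule.subset_span (Set.mem_insert_iff.2 (Or.inr rfl))
  set K1 : Kspan k m := ⟨_, memK1⟩ with hK1
  set K2 : Kspan k m := ⟨_, memK2⟩ with hK2
  set a := ((L K1 : Cspan k m) : Cod k m) with ha
  set b := ((L K2 : Cspan k m) : Cod k m) with hb
  refine ⟨(S8.uchoice k m a b, 0), fun κ => ?_⟩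
  obtain ⟨c, d, hcd⟩ := Submodule.mem_span_pair.1
    (show (κ : Dom k m × ℝ) ∈ Submodule.span ℝ
      {((ez k m, 0) : Dom k m × ℝ), (((0:Dom k m), 1) : Dom k m × ℝ)} from κ.2)
  have h1 : (fderiv ℝ (fun q => fderiv ℝ (ftilde k m) q) (pOfS k m s, 0)
      (S8.uchoice k m a b, 0)) ((ez k m, 0)) = a := by
    rw [(S8.fderiv2_spec k m s).2 (S8.uchoice k m a b) (ez k m) 0]
    exact S8.eval_gen1 k m a b (L K1).2
  have h2 : (fderiv ℝ (fun q => fderiv ℝ (ftilde k m) q) (pOfS k m s, 0)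
      (S8.uchoice k m a b, 0)) (((0:Dom k m), 1)) = b := by
    rw [(S8.fderiv2_spec k m s).2 (S8.uchoice k m a b) 0 1]
    exact S8.eval_gen2 k m a b (L K2).2
  have hκcoe : (κ : Dom k m × ℝ)
      = c • ((ez k m, 0) : Dom k m × ℝ) + d • (((0:Dom k m), 1) : Dom k m × ℝ) := hcd.symm
  have hκ : κ = c • K1 + d • K2 := Subtype.ext (by rw [hκcoe]; rfl)
  rw [hκcoe]
  simp only [map_add, map_smul]
  rw [h1, h2, ha, hb]
  rw [Submodule.orthogonalProjectionOnto_mem_subspace_eq_self, Submodule.orthogonalProjectionOnto_mem_subspace_eq_self]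
  rw [hκ, map_add, map_smul, map_smul]
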